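/- arXiv:1709.08736 — 2 statements merged into one kernel-verified Lean document; each statement's English description precedes it below -/
import Mathlib

section
/- For integers h ≥ 1 and k, s ≥ 0, the q-binomial identity q^s · C_q(h-1, s) · C_q(h+k-s-1, h) + C_q(h-1, s-1) · C_q(h+k-s, h) = C_q(k, s) · C_q(h+k-s-1, h-s) holds, where C_q(n,k) denotes the Gaussian (q-)binomial coefficient. -/
/- Gaussian binomial coefficients as rational functions in the indeterminate `q`. -/

open Finset

/-- The indeterminate `q`, an element of the field of rational functions `ℚ(q)`. -/
noncomputable def q : RatFunc ℚ := RatFunc.X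

/-- The `q`-integer `[n]_q = 1 + q + ⋯ + q^{n-1}`. -/
noncomputable def qint (n : ℕ) : RatFunc ℚ := ∑ i ∈ Finset.range n, q ^ i

/-- The `q`-factorial `[n]_q!`. -/
noncomputable def qfact (n : ℕ) : RatFunc ℚ := ∏ i ∈ Finset.range n, qint (i + 1)

/-- The Gaussian binomial coefficient `C_q(n, k) = [n]_q!/([k]_q![n-k]_q!)`,
with the convention that it vanishes unless `0 ≤ k ≤ n`. -/
noncomputable def qbinom (n k : ℤ) : RatFunc ℚ :=
  if 0 ≤ k ∧ k ≤ n then qfact n.toNat / (qfact k.toNat * qfact (n - k).toNat) else 0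


/- Auxiliary lemmas -/

lemma qpow_sub_one_ne_zero {m : ℕ} (hm : 1 ≤ m) : q ^ m - (1 : RatFunc ℚ) ≠ 0 := by
  have e : q ^ m - (1 : RatFunc ℚ)
      = algebraMap (Polynomial ℚ) (RatFunc ℚ) (Polynomial.X ^ m - Polynomial.C 1) := by
    simp [q, map_sub, map_pow, RatFunc.algebraMap_X]
  rw [e]
  exact RatFunc.algebraMap_ne_zero (Polynomial.X_pow_sub_C_ne_zero hm 1)

lemma hq : q - (1 : RatFunc ℚ) ≠ 0 := by
  simpa using qpow_sub_one_ne_zero (le_refl 1)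

lemma qe (n : ℕ) : qint n = (q ^ n - 1) / (q - 1) := by
  rw [qint, eq_div_iff hq]; exact geom_sum_mul q n

lemma qint_ne_zero {n : ℕ} (hn : 1 ≤ n) : qint n ≠ 0 := by
  rw [qe]; exact div_ne_zero (qpow_sub_one_ne_zero hn) hq

lemma qfact_ne_zero (n : ℕ) : qfact n ≠ 0 := by
  rw [qfact]
  exact Finset.prod_ne_zero_iff.mpr fun i _ => qint_ne_zero (by omega)

lemma qfact_succ (n : ℕ) : qfact (n + 1) = qfact n * qint (n + 1) :=
  Finset.prod_range_succ _ n

lemma qfact_zero : qfact 0 = 1 := rfl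

lemma qbinom_of_le (a b : ℕ) (hb : b ≤ a) :
    qbinom (a : ℤ) (b : ℤ) = qfact a / (qfact b * qfact (a - b)) := by
  rw [qbinom, if_pos ⟨by positivity, by exact_mod_cast hb⟩]
  have h1 : ((a : ℤ)).toNat = a := by omega
  have h2 : ((b : ℤ)).toNat = b := by omega
  have h3 : ((a : ℤ) - (b : ℤ)).toNat = a - b := by omega
  rw [h1, h2, h3]

lemma qbinom_eq_zero {n k : ℤ} (h : ¬(0 ≤ k ∧ k ≤ n)) : qbinom n k = 0 := if_neg h

lemma qbinom_self (a : ℕ) : qbinom (a : ℤ) (a : ℤ) = 1 := by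
  rw [qbinom_of_le a a le_rfl, Nat.sub_self, qfact_zero, mul_one,
    div_self (qfact_ne_zero a)]

lemma qbinom_zero' (a : ℕ) : qbinom (a : ℤ) 0 = 1 := by
  have := qbinom_of_le a 0 (Nat.zero_le a)
  rw [Nat.cast_zero] at this
  rw [this, Nat.sub_zero, qfact_zero, one_mul, div_self (qfact_ne_zero a)]

/-- The key `q`-integer identity `q^a [b][c] + [a][a+b+c] = [a+c][a+b]`. -/
lemma qkey (a b c : ℕ) :
    q ^ a * qint b * qint c + qint a * qint (a + b + c) = qint (a + c) * qint (a + b) := by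
  simp only [qe]
  field_simp
  ring

/-- A generic field computation used in the main case. -/
lemma gen {K : Type*} [Field K] (Q A B C D E F x1 x2 x3 x4 x5 x6 : K)
    (hA : A ≠ 0) (hB : B ≠ 0) (hC : C ≠ 0) (hD : D ≠ 0) (hE : E ≠ 0)
    (h1 : x1 ≠ 0) (h2 : x2 ≠ 0) (h3 : x3 ≠ 0) (h4 : x4 ≠ 0)
    (key : Q * x2 * x3 + x1 * x6 = x5 * x4) :
    Q * (D / (A * x1 * B)) * (F / (D * x4 * C))
      + D / (A * (B * x2)) * (F * x6 / (D * x4 * (C * x3)))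
    = E * x5 / (A * x1 * (C * x3)) * (F / (B * x2 * E)) := by
  rw [mul_assoc Q, div_mul_div_comm, div_mul_div_comm, div_mul_div_comm, mul_div_assoc',
    div_add_div _ _ (by simp [mul_eq_zero, hA, hB, hC, hD, h1, h2, h3, h4])
      (by simp [mul_eq_zero, hA, hB, hC, hD, h1, h2, h3, h4]),
    div_eq_div_iff
      (by simp [mul_eq_zero, hA, hB, hC, hD, h1, h2, h3, h4])
      (by simp [mul_eq_zero, hA, hB, hC, hE, h1, h2, h3])]
  linear_combination (A * B * C * D * D * F * x4 * A * x1 * C * x3 * B * x2 * E) * key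

/-- For `h ≥ 1` and `k, s ≥ 0`,
`q^s C_q(h-1,s) C_q(h+k-s-1,h) + C_q(h-1,s-1) C_q(h+k-s,h) = C_q(k,s) C_q(h+k-s-1,h-s)`. -/
theorem stmt0 (h k s : ℕ) (hh : 1 ≤ h) :
    q ^ s * qbinom ((h : ℤ) - 1) (s : ℤ) * qbinom ((h : ℤ) + (k : ℤ) - (s : ℤ) - 1) (h : ℤ)
      + qbinom ((h : ℤ) - 1) ((s : ℤ) - 1) * qbinom ((h : ℤ) + (k : ℤ) - (s : ℤ)) (h : ℤ)
    = qbinom (k : ℤ) (s : ℤ) * qbinom ((h : ℤ) + (k : ℤ) - (s : ℤ) - 1) ((h : ℤ) - (s : ℤ)) := by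
  rcases lt_or_ge k s with hks | hks
  · -- `s > k` : everything vanishes
    rw [qbinom_eq_zero (n := (h:ℤ)+(k:ℤ)-(s:ℤ)-1) (k := (h:ℤ)) (by omega),
      qbinom_eq_zero (n := (h:ℤ)+(k:ℤ)-(s:ℤ)) (k := (h:ℤ)) (by omega),
      qbinom_eq_zero (n := (k:ℤ)) (k := (s:ℤ)) (by omega)]
    ring
  · rcases lt_or_ge h s with hhs | hhs
    · -- `s ≥ h + 1`
      rw [qbinom_eq_zero (n := (h:ℤ)-1) (k := (s:ℤ)) (by omega),
        qbinom_eq_zero (n := (h:ℤ)-1) (k := (s:ℤ)-1) (by omega),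
        qbinom_eq_zero (n := (h:ℤ)+(k:ℤ)-(s:ℤ)-1) (k := (h:ℤ)-(s:ℤ)) (by omega)]
      ring
    · rcases eq_or_lt_of_le hhs with hse | hsh
      · -- `s = h`
        subst hse
        rw [qbinom_eq_zero (n := (s:ℤ)-1) (k := (s:ℤ)) (by omega)]
        obtain ⟨a, rfl⟩ : ∃ a, s = a + 1 := ⟨s - 1, by omega⟩
        rw [show ((a+1:ℕ):ℤ) - 1 = ((a:ℕ):ℤ) by push_cast; ring,
          show ((a+1:ℕ):ℤ) + (k:ℤ) - ((a+1:ℕ):ℤ) - 1 = ((k-1:ℕ):ℤ) by push_cast; omega,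
          show ((a+1:ℕ):ℤ) + (k:ℤ) - ((a+1:ℕ):ℤ) = ((k:ℕ):ℤ) by push_cast; ring,
          show ((a+1:ℕ):ℤ) - ((a+1:ℕ):ℤ) = ((0:ℕ):ℤ) by ring,
          Nat.cast_zero, qbinom_self a, qbinom_zero' (k-1)]
        ring
      · -- `s < h`, `s ≤ k`
        rcases Nat.eq_zero_or_pos s with rfl | hs1
        · -- `s = 0`
          rw [qbinom_eq_zero (n := (h:ℤ)-1) (k := ((0:ℕ):ℤ)-1) (by omega)]
          rw [show (h:ℤ) - 1 = ((h-1:ℕ):ℤ) by omega,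
            show (h:ℤ)+(k:ℤ)-((0:ℕ):ℤ)-1 = ((h+k-1:ℕ):ℤ) by push_cast; omega,
            show (h:ℤ)-((0:ℕ):ℤ) = ((h:ℕ):ℤ) by push_cast; omega]
          rw [Nat.cast_zero, qbinom_zero' (h-1), qbinom_zero' k]
          simp
        · rcases eq_or_lt_of_le hks with hske | hsk
          · -- `s = k`, `1 ≤ s ≤ h - 1`
            subst hske
            obtain ⟨t, rfl⟩ : ∃ t, s = t + 1 := ⟨s - 1, by omega⟩
            obtain ⟨u, hu⟩ : ∃ u, h = t + u + 2 := ⟨h - t - 2, by omega⟩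
            subst hu
            rw [qbinom_eq_zero
                (n := ((t+u+2:ℕ):ℤ)+((t+1:ℕ):ℤ)-((t+1:ℕ):ℤ)-1) (k := ((t+u+2:ℕ):ℤ))
                (by push_cast; omega)]
            rw [show ((t+u+2:ℕ):ℤ)+((t+1:ℕ):ℤ)-((t+1:ℕ):ℤ) = ((t+u+2:ℕ):ℤ) by ring,
              show ((t+u+2:ℕ):ℤ)-((t+1:ℕ):ℤ) = ((u+1:ℕ):ℤ) by push_cast; ring,
              show ((t+u+2:ℕ):ℤ) - 1 = ((t+u+1:ℕ):ℤ) by push_cast; ring,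
              show ((t+1:ℕ):ℤ) - 1 = ((t:ℕ):ℤ) by push_cast; ring]
            rw [qbinom_self (t+u+2), qbinom_self (t+1),
              qbinom_of_le (t+u+1) t (by omega), qbinom_of_le (t+u+1) (u+1) (by omega),
              show t+u+1-t = u+1 by omega, show t+u+1-(u+1) = t by omega]
            ring
          · -- main case : `1 ≤ s`, `s + 1 ≤ k`, `s + 1 ≤ h`
            obtain ⟨t, rfl⟩ : ∃ t, s = t + 1 := ⟨s - 1, by omega⟩
            obtain ⟨b, hb⟩ : ∃ b, h = t + b + 2 := ⟨h - t - 2, by omega⟩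
            obtain ⟨c, hc⟩ : ∃ c, k = t + c + 2 := ⟨k - t - 2, by omega⟩
            subst hb; subst hc
            rw [show ((t+b+2:ℕ):ℤ)+((t+c+2:ℕ):ℤ)-((t+1:ℕ):ℤ) = ((t+b+c+3:ℕ):ℤ) by
                push_cast; ring,
              show ((t+b+c+3:ℕ):ℤ)-1 = ((t+b+c+2:ℕ):ℤ) by push_cast; ring,
              show ((t+b+2:ℕ):ℤ)-((t+1:ℕ):ℤ) = ((b+1:ℕ):ℤ) by push_cast; ring,
              show ((t+b+2:ℕ):ℤ) - 1 = ((t+b+1:ℕ):ℤ) by push_cast; ring,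
              show ((t+1:ℕ):ℤ) - 1 = ((t:ℕ):ℤ) by push_cast; ring]
            rw [qbinom_of_le (t+b+1) (t+1) (by omega),
              qbinom_of_le (t+b+c+2) (t+b+2) (by omega),
              qbinom_of_le (t+b+1) t (by omega),
              qbinom_of_le (t+b+c+3) (t+b+2) (by omega),
              qbinom_of_le (t+c+2) (t+1) (by omega),
              qbinom_of_le (t+b+c+2) (b+1) (by omega)]
            rw [show t+b+1-(t+1) = b by omega, show t+b+c+2-(t+b+2) = c by omega,
              show t+b+1-t = b+1 by omega, show t+b+c+3-(t+b+2) = c+1 by omega,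
              show t+c+2-(t+1) = c+1 by omega, show t+b+c+2-(b+1) = t+c+1 by omega]
            rw [qfact_succ t, qfact_succ b, qfact_succ c,
              show t+b+2 = (t+b+1)+1 by omega, qfact_succ (t+b+1),
              show t+c+2 = (t+c+1)+1 by omega, qfact_succ (t+c+1),
              show t+b+c+3 = (t+b+c+2)+1 by omega, qfact_succ (t+b+c+2)]
            have key := qkey (t+1) (b+1) (c+1)
            rw [show t+1+(b+1)+(c+1) = (t+b+c+2)+1 by omega,
              show t+1+(c+1) = (t+c+1)+1 by omega,
              show t+1+(b+1) = (t+b+1)+1 by omega] at key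
            exact gen (q^(t+1)) (qfact t) (qfact b) (qfact c) (qfact (t+b+1))
              (qfact (t+c+1)) (qfact ((t+b+c+2))) (qint (t+1)) (qint (b+1)) (qint (c+1))
              (qint ((t+b+1)+1)) (qint ((t+c+1)+1)) (qint ((t+b+c+2)+1))
              (qfact_ne_zero t) (qfact_ne_zero b) (qfact_ne_zero c)
              (qfact_ne_zero (t+b+1)) (qfact_ne_zero (t+c+1))
              (qint_ne_zero (by omega)) (qint_ne_zero (by omega))
              (qint_ne_zero (by omega)) (qint_ne_zero (by omega)) key
end

section
/- For n ≥ 1, the set of decorated Dyck paths of size n in which the first bounce word consists entirely of zeros, with a decorated peaks and b decorated falls where the first peak is undecorated, has generating function (in q for area, t for bounce) equal to δ_{a,0} · q^{binom(n-b,2)} · C_q(n-1, b). In particular such paths exist only when a = 0, and then area-generating function over the C(n-1,b) choices of decorated falls is q^{binom(n-b,2)} C_q(n-1,b). -/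
open Finset
open scoped Classical

/-- The field `ℚ(q,t)` of rational functions in two variables. -/
abbrev Kqt : Type := FractionRing (MvPolynomial (Fin 2) ℚ)

/-- The variable `q`. -/
noncomputable def qv : Kqt := algebraMap (MvPolynomial (Fin 2) ℚ) Kqt (MvPolynomial.X 0)

/-- The variable `t`. -/
noncomputable def tv : Kqt := algebraMap (MvPolynomial (Fin 2) ℚ) Kqt (MvPolynomial.X 1)

/-- The `q`-integer `[n]_q`. -/
noncomputable def qintK (n : ℕ) : Kqt := ∑ i ∈ Finset.range n, qv ^ i

/-- The `q`-factorial `[n]_q!`. -/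
noncomputable def qfactK (n : ℕ) : Kqt := ∏ i ∈ Finset.range n, qintK (i + 1)

/-- The Gaussian binomial coefficient `C_q(n, k)`, zero unless `0 ≤ k ≤ n`. -/
noncomputable def qbinomK (n k : ℤ) : Kqt :=
  if 0 ≤ k ∧ k ≤ n then qfactK n.toNat / (qfactK k.toNat * qfactK (n - k).toNat) else 0

/-- The data of a candidate decorated Dyck path of size `n` with decorated peaks and
decorated falls: a (bounded) area word, a set of decorated peaks (indexing north steps)
and a set of decorated falls (indexing east steps, the east step of column `j` being the
`j`-th one). -/
abbrev FallData (n : ℕ) : Type :=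
  (Fin n → Fin (n + 1)) × Finset (Fin n) × Finset (Fin n)

namespace FallData

variable {n : ℕ}

/-- The area word, as a function to `ℕ`. -/
def w (D : FallData n) (i : Fin n) : ℕ := (D.1 i : ℕ)

/-- The north step of row `i` is a rise (followed by another north step). -/
def isRise (D : FallData n) (i : Fin n) : Prop :=
  ∃ j : Fin n, (j : ℕ) = (i : ℕ) + 1 ∧ D.w j = D.w i + 1

/-- The north step of row `i` is a peak (followed by an east step). -/
def isPeak (D : FallData n) (i : Fin n) : Prop := ¬ D.isRise i

/-- The east step of column `j` is a fall: it is followed by another east step, i.e. it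
is not the last east step and no north step lies in column `j + 1`
(the north step of row `i` lies in column `i - w i`). -/
def isFall (D : FallData n) (j : Fin n) : Prop :=
  (j : ℕ) + 1 ≠ n ∧ ∀ i : Fin n, (i : ℕ) - D.w i ≠ (j : ℕ) + 1

/-- `D` is a genuine decorated Dyck path of size `n` with `a` decorated peaks and `b`
decorated falls: the area word starts at `0` and increases by at most `1`, decorations
sit on peaks resp. falls, and have the prescribed cardinalities. -/
def IsDecDyckF (a b : ℕ) (D : FallData n) : Prop :=
  (∀ i : Fin n, (i : ℕ) = 0 → D.w i = 0)
    ∧ (∀ i j : Fin n, (j : ℕ) = (i : ℕ) + 1 → D.w j ≤ D.w i + 1)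
    ∧ (∀ i ∈ D.2.1, D.isPeak i) ∧ (∀ j ∈ D.2.2, D.isFall j)
    ∧ D.2.1.card = a ∧ D.2.2.card = b

/-- The number of north steps in columns `≤ x`. -/
noncomputable def pathHeight (D : FallData n) (x : ℕ) : ℕ :=
  (Finset.univ.filter (fun i : Fin n => (i : ℕ) - D.w i ≤ x)).card

/-- The heights at which the first bounce path meets the main diagonal. -/
noncomputable def bpeaks (D : FallData n) : ℕ → ℕ
  | 0 => 0
  | k + 1 => D.pathHeight (D.bpeaks k)

/-- The label of row `r` in the first bounce word. -/
noncomputable def blabel (D : FallData n) (r : ℕ) : ℕ :=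
  ((Finset.range (r + 1)).filter (fun k => D.bpeaks (k + 1) ≤ r)).card

/-- The first bounce statistic: the sum of the labels of the first bounce word over the
rows whose north step is not a decorated peak. -/
noncomputable def bounce (D : FallData n) : ℕ :=
  ∑ i ∈ Finset.univ.filter (fun i : Fin n => i ∉ D.2.1), D.blabel (i : ℕ)

/-- The area: the total number of whole squares between the path and the main diagonal,
excluding the squares in the columns of the decorated falls (the east step of column `j`
lies at height `pathHeight j`, giving `pathHeight j - (j+1)` squares in that column). -/
noncomputable def area (D : FallData n) : ℕ :=
  (∑ i : Fin n, D.w i) - ∑ j ∈ D.2.2, (D.pathHeight (j : ℕ) - ((j : ℕ) + 1))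

/-- The first bounce word of `D` consists entirely of zeroes. -/
noncomputable def allZeroBounceWord (D : FallData n) : Prop :=
  ∀ r : Fin n, D.blabel (r : ℕ) = 0

/-- The first peak of the path is not decorated. -/
def firstPeakUndecorated (D : FallData n) : Prop :=
  ∀ i ∈ D.2.1, ∃ j : Fin n, j < i ∧ D.isPeak j

end FallData

lemma qint_ne_zero_s12 {k : ℕ} (hk : 1 ≤ k) : qintK k ≠ 0 := by
  have : qintK k = algebraMap (MvPolynomial (Fin 2) ℚ) Kqt (∑ i ∈ Finset.range k, MvPolynomial.X 0 ^ i) := by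
    simp [qintK, qv, map_sum]
  rw [this]
  intro h
  have hinj := IsFractionRing.injective (MvPolynomial (Fin 2) ℚ) Kqt
  have h0 : (∑ i ∈ Finset.range k, (MvPolynomial.X 0 : MvPolynomial (Fin 2) ℚ) ^ i) = 0 := by
    apply hinj; simpa using h
  have := congrArg (MvPolynomial.eval (fun _ => (0:ℚ))) h0
  simp [MvPolynomial.eval_sum, zero_pow_eq, Finset.sum_ite_eq'] at this
  omega

lemma qfact_ne_zero_s12 (m : ℕ) : qfactK m ≠ 0 := by
  unfold qfactK
  exact Finset.prod_ne_zero_iff.2 fun i _ => qint_ne_zero_s12 (by omega)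

lemma qfact_succ_s12 (m : ℕ) : qfactK (m + 1) = qfactK m * qintK (m + 1) := by
  rw [qfactK, Finset.prod_range_succ]; rfl

lemma qint_add (x y : ℕ) : qintK (x + y) = qintK x + qv ^ x * qintK y := by
  rw [qintK, Finset.sum_range_add, qintK, qintK, Finset.mul_sum]
  congr 1
  exact Finset.sum_congr rfl fun i _ => (pow_add qv x i)

/-- q-binomial with natural arguments. -/
noncomputable def qb (m k : ℕ) : Kqt :=
  if k ≤ m then qfactK m / (qfactK k * qfactK (m - k)) else 0

lemma qbinomK_natCast (m k : ℕ) : qbinomK (m : ℤ) (k : ℤ) = qb m k := by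
  unfold qbinomK qb
  by_cases h : k ≤ m
  · rw [if_pos ⟨Int.natCast_nonneg k, by exact_mod_cast h⟩, if_pos h]
    have : ((m : ℤ) - (k : ℤ)).toNat = m - k := by omega
    rw [this]; simp
  · rw [if_neg (by simp; omega), if_neg h]

lemma qb_self (m : ℕ) : qb m m = 1 := by
  unfold qb
  rw [if_pos le_rfl, Nat.sub_self]
  have h0 : qfactK 0 = 1 := by simp [qfactK]
  rw [h0, mul_one, div_self (qfact_ne_zero_s12 m)]

lemma qb_zero (m : ℕ) : qb m 0 = 1 := by
  unfold qb
  rw [if_pos (Nat.zero_le m), Nat.sub_zero]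
  have h0 : qfactK 0 = 1 := by simp [qfactK]
  rw [h0, one_mul, div_self (qfact_ne_zero_s12 m)]

lemma qb_symm (m k : ℕ) (h : k ≤ m) : qb m (m - k) = qb m k := by
  unfold qb
  rw [if_pos (Nat.sub_le m k), if_pos h, Nat.sub_sub_self h, mul_comm]

lemma pascal (m b' : ℕ) :
    qv ^ b' * qb (m + 1) (b' + 1) = qv ^ b' * qb m (b' + 1) + qv ^ m * qb m b' := by
  rcases lt_trichotomy b' m with h | rfl | h
  · -- b' < m
    have hb : b' + 1 ≤ m := h
    have hd : m - b' = (m - (b' + 1)) + 1 := by omega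
    set d := m - (b' + 1) with hdd
    unfold qb
    rw [if_pos (by omega : b' + 1 ≤ m + 1), if_pos hb, if_pos (Nat.le_of_lt h)]
    have h1 : m + 1 - (b' + 1) = d + 1 := by omega
    have h2 : m - (b' + 1) = d := rfl
    have h3 : m - b' = d + 1 := by omega
    rw [h1, h2, h3]
    have hsplit : qintK (m + 1) = qintK (d + 1) + qv ^ (d + 1) * qintK (b' + 1) := by
      have : m + 1 = (d + 1) + (b' + 1) := by omega
      rw [this, qint_add]
    have hm : qfactK (m + 1) = qfactK m * qintK (m + 1) := qfact_succ_s12 m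
    have hb1 : qfactK (b' + 1) = qfactK b' * qintK (b' + 1) := qfact_succ_s12 b'
    have hd1 : qfactK (d + 1) = qfactK d * qintK (d + 1) := qfact_succ_s12 d
    rw [hm, hsplit, hb1, hd1]
    have n1 := qfact_ne_zero_s12 m
    have n2 := qfact_ne_zero_s12 b'
    have n3 := qfact_ne_zero_s12 d
    have n4 : qintK (b' + 1) ≠ 0 := qint_ne_zero_s12 (by omega)
    have n5 : qintK (d + 1) ≠ 0 := qint_ne_zero_s12 (by omega)
    have hq : qv ^ m = qv * (qv ^ b' * qv ^ d) := by
      rw [← pow_add, ← pow_succ']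
      congr 1
      omega
    field_simp
    rw [hq]
    ring
  · -- b' = m
    rw [qb_self]
    have : qb b' (b' + 1) = 0 := by unfold qb; rw [if_neg (by omega)]
    rw [this, qb_self]
    ring
  · -- b' > m
    have h1 : qb (m + 1) (b' + 1) = 0 := by unfold qb; rw [if_neg (by omega)]
    have h2 : qb m (b' + 1) = 0 := by unfold qb; rw [if_neg (by omega)]
    have h3 : qb m b' = 0 := by unfold qb; rw [if_neg (by omega)]
    rw [h1, h2, h3]; ring

lemma keyI (m : ℕ) : ∀ b : ℕ,
    ∑ T ∈ Finset.powersetCard b (Finset.range m), qv ^ (∑ j ∈ T, j)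
      = qv ^ (b * (b - 1) / 2) * qb m b := by
  induction m with
  | zero =>
    intro b
    cases b with
    | zero => simp [qb_zero]
    | succ b' =>
      rw [Finset.range_zero, Finset.powersetCard_eq_empty.2 (by simp)]
      have : qb 0 (b' + 1) = 0 := by unfold qb; rw [if_neg (by omega)]
      simp [this]
  | succ m ih =>
    intro b
    cases b with
    | zero => simp [qb_zero]
    | succ b' =>
      have hm : (m : ℕ) ∉ Finset.range m := by simp
      rw [Finset.range_add_one, Finset.powersetCard_succ_insert hm]
      have hdisj : Disjoint (Finset.powersetCard (b' + 1) (Finset.range m))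
          ((Finset.powersetCard b' (Finset.range m)).image (insert m)) := by
        rw [Finset.disjoint_left]
        intro T hT hT'
        simp only [Finset.mem_powersetCard, Finset.mem_image] at hT hT'
        obtain ⟨U, hU, rfl⟩ := hT'
        exact hm (hT.1 (Finset.mem_insert_self m U))
      rw [Finset.sum_union hdisj]
      have himg : ∑ T ∈ (Finset.powersetCard b' (Finset.range m)).image (insert m),
          qv ^ (∑ j ∈ T, j)
          = ∑ U ∈ Finset.powersetCard b' (Finset.range m), qv ^ (m + ∑ j ∈ U, j) := by
        rw [Finset.sum_image]
        · apply Finset.sum_congr rfl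
          intro U hU
          simp only [Finset.mem_powersetCard] at hU
          rw [Finset.sum_insert (fun h => hm (hU.1 h))]
        · intro U hU V hV hUV
          simp only [Finset.mem_coe, Finset.mem_powersetCard] at hU hV
          have hU' : m ∉ U := fun h => hm (hU.1 h)
          have hV' : m ∉ V := fun h => hm (hV.1 h)
          rw [← Finset.erase_insert hU', ← Finset.erase_insert hV', hUV]
      rw [himg, ih (b' + 1)]
      have : ∑ U ∈ Finset.powersetCard b' (Finset.range m), qv ^ (m + ∑ j ∈ U, j)
          = qv ^ m * (qv ^ (b' * (b' - 1) / 2) * qb m b') := by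
        rw [← ih b', Finset.mul_sum]
        exact Finset.sum_congr rfl fun U _ => pow_add qv m _
      rw [this]
      have hx : (b' + 1) * (b' + 1 - 1) / 2 = b' * (b' - 1) / 2 + b' := by
        have e1 : 2 ∣ b' * (b' + 1) := (Nat.even_mul_succ_self b').two_dvd
        have e2 : 2 ∣ b' * (b' - 1) := by
          rcases b' with _ | c
          · simp
          · simpa [Nat.mul_comm, Nat.succ_sub_one] using (Nat.even_mul_succ_self c).two_dvd
        have h3 : (b' + 1) * (b' + 1 - 1) = b' * (b' + 1) := by
          rw [Nat.add_sub_cancel, Nat.mul_comm]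
        have h4 : b' * (b' + 1) = b' * (b' - 1) + 2 * b' := by
          rcases b' with _ | c
          · simp
          · simp only [Nat.succ_sub_one]; ring
        omega
      rw [hx, pow_add]
      have hp := pascal m b'
      calc qv ^ (b' * (b' - 1) / 2) * qv ^ b' * qb m (b' + 1)
            + qv ^ m * (qv ^ (b' * (b' - 1) / 2) * qb m b')
          = qv ^ (b' * (b' - 1) / 2) * (qv ^ b' * qb m (b' + 1) + qv ^ m * qb m b') := by ring
        _ = qv ^ (b' * (b' - 1) / 2) * (qv ^ b' * qb (m + 1) (b' + 1)) := by rw [← hp]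
        _ = qv ^ (b' * (b' - 1) / 2) * qv ^ b' * qb (m + 1) (b' + 1) := by ring


namespace FallData
variable {n : ℕ}

/-- Dyck condition implies w i ≤ i. -/
lemma w_le (D : FallData n)
    (h0 : ∀ i : Fin n, (i : ℕ) = 0 → D.w i = 0)
    (h1 : ∀ i j : Fin n, (j : ℕ) = (i : ℕ) + 1 → D.w j ≤ D.w i + 1) :
    ∀ i : Fin n, D.w i ≤ (i : ℕ) := by
  intro i
  obtain ⟨k, hk⟩ := i
  induction k with
  | zero => exact le_of_eq (h0 ⟨0, hk⟩ rfl)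
  | succ k ihk =>
    have hk' : k < n := by omega
    have := h1 ⟨k, hk'⟩ ⟨k + 1, hk⟩ rfl
    have := ihk hk'
    simp only at *
    omega

/-- All-zero bounce word implies w i = i. -/
lemma w_eq (D : FallData n) (hn : 1 ≤ n)
    (h0 : ∀ i : Fin n, (i : ℕ) = 0 → D.w i = 0)
    (h1 : ∀ i j : Fin n, (j : ℕ) = (i : ℕ) + 1 → D.w j ≤ D.w i + 1)
    (hz : D.allZeroBounceWord) :
    ∀ i : Fin n, D.w i = (i : ℕ) := by
  have hlast : D.blabel (n - 1) = 0 := hz ⟨n - 1, by omega⟩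
  have hb1 : ¬ D.bpeaks 1 ≤ n - 1 := by
    intro hle
    have h0mem : (0 : ℕ) ∈ (Finset.range (n - 1 + 1)).filter (fun k => D.bpeaks (k + 1) ≤ n - 1) := by
      simp [hle]
    rw [FallData.blabel] at hlast
    rw [Finset.card_eq_zero] at hlast
    rw [hlast] at h0mem
    simp at h0mem
  have hph : D.pathHeight 0 = n := by
    have hle : D.pathHeight 0 ≤ n := by
      rw [FallData.pathHeight]
      calc _ ≤ (Finset.univ : Finset (Fin n)).card := Finset.card_filter_le _ _
        _ = n := Finset.card_univ.trans (Fintype.card_fin n)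
    have : D.bpeaks 1 = D.pathHeight 0 := by rw [FallData.bpeaks, FallData.bpeaks]
    omega
  have huniv : (Finset.univ.filter (fun i : Fin n => (i : ℕ) - D.w i ≤ 0)) = Finset.univ := by
    apply Finset.eq_univ_of_card
    rw [← FallData.pathHeight, hph]; simp
  intro i
  have hi : (i : ℕ) - D.w i ≤ 0 := by
    have := Finset.eq_univ_iff_forall.1 huniv i
    simpa using this
  have := D.w_le h0 h1 i
  omega

lemma pathHeight_of_diag (D : FallData n) (hw : ∀ i : Fin n, D.w i = (i : ℕ)) (x : ℕ) :
    D.pathHeight x = n := by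
  rw [FallData.pathHeight]
  have : (Finset.univ.filter (fun i : Fin n => (i : ℕ) - D.w i ≤ x)) = Finset.univ := by
    apply Finset.eq_univ_of_forall
    intro i
    simp [hw i]
  rw [this]; simp

lemma blabel_of_diag (D : FallData n) (hw : ∀ i : Fin n, D.w i = (i : ℕ)) (r : ℕ) (hr : r < n) :
    D.blabel r = 0 := by
  rw [FallData.blabel, Finset.card_eq_zero]
  apply Finset.filter_eq_empty_iff.2
  intro k _
  have : D.bpeaks (k + 1) = n := by
    rw [FallData.bpeaks, D.pathHeight_of_diag hw]
  omega

lemma bounce_of_zero (D : FallData n) (hz : D.allZeroBounceWord) : D.bounce = 0 := by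
  rw [FallData.bounce]
  apply Finset.sum_eq_zero
  intro i _
  exact hz i

lemma isPeak_iff (D : FallData n) (hw : ∀ i : Fin n, D.w i = (i : ℕ)) (i : Fin n) :
    D.isPeak i ↔ (i : ℕ) + 1 = n := by
  constructor
  · intro hp
    by_contra hne
    have hlt : (i : ℕ) + 1 < n := lt_of_le_of_ne i.2 hne
    exact hp ⟨⟨(i : ℕ) + 1, hlt⟩, rfl, by rw [hw, hw]⟩
  · rintro he ⟨j, hj, _⟩
    have := j.2
    omega

lemma isFall_iff (D : FallData n) (hw : ∀ i : Fin n, D.w i = (i : ℕ)) (j : Fin n) :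
    D.isFall j ↔ (j : ℕ) + 1 ≠ n := by
  constructor
  · exact fun h => h.1
  · intro h
    exact ⟨h, fun i => by simp [hw i]⟩

lemma peaks_empty (D : FallData n) (hw : ∀ i : Fin n, D.w i = (i : ℕ))
    (hp : ∀ i ∈ D.2.1, D.isPeak i) (hfp : D.firstPeakUndecorated) : D.2.1 = ∅ := by
  apply Finset.eq_empty_of_forall_notMem
  intro i hi
  obtain ⟨j, hji, hjp⟩ := hfp i hi
  have h1 : (i : ℕ) + 1 = n := (D.isPeak_iff hw i).1 (hp i hi)
  have h2 : (j : ℕ) + 1 = n := (D.isPeak_iff hw j).1 hjp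
  have : (j : ℕ) < (i : ℕ) := hji
  omega

end FallData

section Reindex
variable (m : ℕ)

private def gm (x : ℕ) : ℕ := m - 1 - x

lemma gm_injOn : Set.InjOn (gm m) (Finset.range m) := by
  intro x hx y hy h
  simp only [Finset.coe_range, Set.mem_Iio] at hx hy
  unfold gm at h
  omega

lemma gm_img_range : (Finset.range m).image (gm m) = Finset.range m := by
  ext k
  simp only [Finset.mem_image, Finset.mem_range]
  constructor
  · rintro ⟨x, hx, rfl⟩; unfold gm; omega
  · intro hk; exact ⟨m - 1 - k, by omega, by unfold gm; omega⟩

lemma gm_img_sdiff {T : Finset ℕ} (hT : T ⊆ Finset.range m) :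
    (Finset.range m \ T).image (gm m) = Finset.range m \ T.image (gm m) := by
  ext k
  simp only [Finset.mem_image, Finset.mem_sdiff, Finset.mem_range]
  constructor
  · rintro ⟨x, ⟨hx, hxT⟩, rfl⟩
    refine ⟨by unfold gm; omega, ?_⟩
    rintro ⟨y, hyT, hyk⟩
    have hy : y < m := Finset.mem_range.1 (hT hyT)
    have : y = x := by unfold gm at hyk; omega
    exact hxT (this ▸ hyT)
  · rintro ⟨hk, hnot⟩
    refine ⟨m - 1 - k, ⟨by omega, ?_⟩, by unfold gm; omega⟩
    intro hmem
    exact hnot ⟨m - 1 - k, hmem, by unfold gm; omega⟩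

private def Phi (T : Finset ℕ) : Finset ℕ := Finset.range m \ T.image (gm m)

lemma gm_img_img {T : Finset ℕ} (hT : T ⊆ Finset.range m) :
    (T.image (gm m)).image (gm m) = T := by
  rw [Finset.image_image]
  have : ∀ x ∈ T, (gm m ∘ gm m) x = x := by
    intro x hx
    have := Finset.mem_range.1 (hT hx)
    simp only [Function.comp]
    unfold gm; omega
  rw [Finset.image_congr (fun x hx => this x hx), Finset.image_id']

lemma Phi_Phi {T : Finset ℕ} (hT : T ⊆ Finset.range m) : Phi m (Phi m T) = T := by
  unfold Phi
  rw [gm_img_sdiff m (Finset.image_subset_iff.2 (fun x hx => by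
    have := Finset.mem_range.1 (hT hx)
    simp only [Finset.mem_range]; unfold gm; omega))]
  rw [gm_img_img m hT, Finset.sdiff_sdiff_self_left, Finset.inter_eq_right.2 hT]

lemma Phi_mem {b : ℕ} {T : Finset ℕ} (hT : T ∈ Finset.powersetCard b (Finset.range m)) :
    Phi m T ∈ Finset.powersetCard (m - b) (Finset.range m) := by
  rw [Finset.mem_powersetCard] at hT ⊢
  obtain ⟨hsub, hcard⟩ := hT
  have himg : T.image (gm m) ⊆ Finset.range m := by
    intro k hk
    obtain ⟨x, hx, rfl⟩ := Finset.mem_image.1 hk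
    have := Finset.mem_range.1 (hsub hx)
    simp only [Finset.mem_range]; unfold gm; omega
  refine ⟨Finset.sdiff_subset, ?_⟩
  unfold Phi
  rw [Finset.card_sdiff_of_subset himg, Finset.card_image_of_injOn
    (Set.InjOn.mono (by rw [Finset.coe_range] at *; exact fun x hx => Finset.mem_coe.1 (hsub hx) |> Finset.mem_range.1 |> Set.mem_Iio.2) (gm_injOn m)), hcard, Finset.card_range]

lemma exponent_eq {b : ℕ} {T : Finset ℕ} (hT : T ∈ Finset.powersetCard b (Finset.range m)) :
    (∑ k ∈ Finset.range (m + 1), k) - ∑ x ∈ T, (m - x)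
      = (m - b) + ∑ k ∈ Phi m T, k := by
  rw [Finset.mem_powersetCard] at hT
  obtain ⟨hsub, hcard⟩ := hT
  have h1 : ∑ k ∈ Finset.range (m + 1), k = ∑ x ∈ Finset.range m, (m - x) := by
    rw [Finset.sum_range_succ' (fun k => k) m]
    have := Finset.sum_range_reflect (fun j => j + 1) m
    have h2 : ∑ j ∈ Finset.range m, (m - 1 - j + 1) = ∑ x ∈ Finset.range m, (m - x) := by
      apply Finset.sum_congr rfl
      intro x hx
      have := Finset.mem_range.1 hx
      omega
    omega
  have h3 : ∑ x ∈ Finset.range m, (m - x) = ∑ x ∈ Finset.range m \ T, (m - x) + ∑ x ∈ T, (m - x) :=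
    (Finset.sum_sdiff hsub).symm
  have h4 : ∑ x ∈ Finset.range m \ T, (m - x) = ∑ k ∈ Phi m T, (k + 1) := by
    unfold Phi
    rw [← gm_img_sdiff m hsub, Finset.sum_image ?_]
    · apply Finset.sum_congr rfl
      intro x hx
      have := Finset.mem_range.1 (Finset.mem_sdiff.1 hx).1
      unfold gm; omega
    · intro x hx y hy h
      have hx' := Finset.mem_range.1 (Finset.mem_sdiff.1 hx).1
      have hy' := Finset.mem_range.1 (Finset.mem_sdiff.1 hy).1
      unfold gm at h; omega
  have h5 : ∑ k ∈ Phi m T, (k + 1) = (∑ k ∈ Phi m T, k) + (m - b) := by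
    rw [Finset.sum_add_distrib, Finset.sum_const, smul_eq_mul, mul_one]
    congr 1
    have := Phi_mem m (Finset.mem_powersetCard.2 ⟨hsub, hcard⟩)
    exact (Finset.mem_powersetCard.1 this).2
  omega

end Reindex

lemma tri (c : ℕ) : (c + 1) * (c + 1 - 1) / 2 = c * (c - 1) / 2 + c := by
  have e1 : 2 ∣ c * (c + 1) := (Nat.even_mul_succ_self c).two_dvd
  have e2 : 2 ∣ c * (c - 1) := by
    rcases c with _ | k
    · simp
    · simpa [Nat.mul_comm, Nat.succ_sub_one] using (Nat.even_mul_succ_self k).two_dvd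
  have h3 : (c + 1) * (c + 1 - 1) = c * (c + 1) := by
    rw [Nat.add_sub_cancel, Nat.mul_comm]
  have h4 : c * (c + 1) = c * (c - 1) + 2 * c := by
    rcases c with _ | k
    · simp
    · simp only [Nat.succ_sub_one]; ring
  omega

lemma sumPC (n b : ℕ) (hn : 1 ≤ n) :
    ∑ T ∈ Finset.powersetCard b (Finset.range (n - 1)),
        qv ^ ((∑ k ∈ Finset.range n, k) - ∑ x ∈ T, (n - (x + 1)))
      = qv ^ ((n - b) * (n - b - 1) / 2) * qb (n - 1) b := by
  set m := n - 1 with hm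
  by_cases hb : b ≤ m
  · have hstep : ∀ T ∈ Finset.powersetCard b (Finset.range m),
        ((∑ k ∈ Finset.range n, k) - ∑ x ∈ T, (n - (x + 1)))
          = (m - b) + ∑ k ∈ Phi m T, k := by
      intro T hT
      have h1 : ∑ x ∈ T, (n - (x + 1)) = ∑ x ∈ T, (m - x) := by
        apply Finset.sum_congr rfl
        intro x _
        omega
      have h2 : Finset.range n = Finset.range (m + 1) := by rw [hm]; congr 1; omega
      rw [h1, h2]
      exact exponent_eq m hT
    rw [Finset.sum_congr rfl (fun T hT => by rw [hstep T hT])]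
    have hbij : ∑ T ∈ Finset.powersetCard b (Finset.range m), qv ^ ((m - b) + ∑ k ∈ Phi m T, k)
        = ∑ U ∈ Finset.powersetCard (m - b) (Finset.range m), qv ^ ((m - b) + ∑ k ∈ U, k) := by
      apply Finset.sum_nbij' (i := Phi m) (j := Phi m)
      · intro T hT; exact Phi_mem m hT
      · intro U hU
        have := Phi_mem m hU
        rwa [Nat.sub_sub_self hb] at this
      · intro T hT; exact Phi_Phi m (Finset.mem_powersetCard.1 hT).1
      · intro U hU; exact Phi_Phi m (Finset.mem_powersetCard.1 hU).1
      · intro T hT; rfl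
    rw [hbij]
    have : ∑ U ∈ Finset.powersetCard (m - b) (Finset.range m), qv ^ ((m - b) + ∑ k ∈ U, k)
        = qv ^ (m - b) * ∑ U ∈ Finset.powersetCard (m - b) (Finset.range m), qv ^ (∑ k ∈ U, k) := by
      rw [Finset.mul_sum]
      exact Finset.sum_congr rfl fun U _ => pow_add qv _ _
    rw [this, keyI m (m - b), qb_symm m b hb]
    set c := m - b with hc
    have hexp : (n - b) * (n - b - 1) / 2 = c + c * (c - 1) / 2 := by
      have h1 : n - b = c + 1 := by omega
      have h2 : n - b - 1 = c := by omega
      rw [h1]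
      have := tri c
      omega
    rw [hexp, pow_add]
    ring
  · rw [Finset.powersetCard_eq_empty.2 (by rw [Finset.card_range]; omega), Finset.sum_empty]
    have : qb m b = 0 := by unfold qb; rw [if_neg hb]
    rw [this, mul_zero]

/-- For `n ≥ 1`, the generating function (`q` for area, `t` for bounce) of decorated
Dyck paths of size `n` whose first bounce word consists entirely of zeroes, with `a`
decorated peaks (the first peak undecorated) and `b` decorated falls, equals
`δ_{a,0} · q^{binom(n-b,2)} · C_q(n-1, b)`. -/
theorem stmt12 (n a b : ℕ) (hn : 1 ≤ n) :
    ∑ D : {D : FallData n //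
        D.IsDecDyckF a b ∧ D.allZeroBounceWord ∧ D.firstPeakUndecorated},
      qv ^ D.1.area * tv ^ D.1.bounce
    = (if a = 0 then 1 else 0) * qv ^ ((n - b) * (n - b - 1) / 2)
        * qbinomK ((n : ℤ) - 1) (b : ℤ) := by
  have hqb : qbinomK ((n : ℤ) - 1) (b : ℤ) = qb (n - 1) b := by
    have h1 : ((n : ℤ) - 1) = ((n - 1 : ℕ) : ℤ) := by omega
    rw [h1, qbinomK_natCast]
  by_cases ha : a = 0
  · subst ha
    rw [if_pos rfl, one_mul, hqb, ← sumPC n b hn]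
    set m := n - 1 with hm
    apply Finset.sum_bij
      (i := fun (D : {D : FallData n //
          D.IsDecDyckF 0 b ∧ D.allZeroBounceWord ∧ D.firstPeakUndecorated}) _ =>
        D.1.2.2.image (fun j : Fin n => (j : ℕ)))
    · -- maps into powersetCard
      rintro ⟨D, hD, hz, hfp⟩ -
      have hw := D.w_eq hn hD.1 hD.2.1 hz
      rw [Finset.mem_powersetCard]
      constructor
      · intro x hx
        obtain ⟨j, hj, rfl⟩ := Finset.mem_image.1 hx
        have hfall := hD.2.2.2.1 j hj
        have := ((D.isFall_iff hw j).1 hfall)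
        have := j.2
        simp only [Finset.mem_range]
        omega
      · rw [Finset.card_image_of_injective _ Fin.val_injective, hD.2.2.2.2.2]
    · -- injective
      rintro ⟨D, hD, hz, hfp⟩ - ⟨D', hD', hz', hfp'⟩ - himg
      have hw := D.w_eq hn hD.1 hD.2.1 hz
      have hw' := D'.w_eq hn hD'.1 hD'.2.1 hz'
      apply Subtype.ext
      have h1 : D.1 = D'.1 := by
        funext i
        apply Fin.ext
        have e1 : ((D.1 i : Fin (n+1)) : ℕ) = (i : ℕ) := hw i
        have e2 : ((D'.1 i : Fin (n+1)) : ℕ) = (i : ℕ) := hw' i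
        rw [e1, e2]
      have h2 : D.2.1 = D'.2.1 := by
        rw [D.peaks_empty hw hD.2.2.1 hfp, D'.peaks_empty hw' hD'.2.2.1 hfp']
      have h3 : D.2.2 = D'.2.2 :=
        Finset.image_injective Fin.val_injective himg
      exact Prod.ext h1 (Prod.ext h2 h3)
    · -- surjective
      intro T hT
      rw [Finset.mem_powersetCard] at hT
      obtain ⟨hsub, hcard⟩ := hT
      have hlt : ∀ x ∈ T, x < n := by
        intro x hx
        have := Finset.mem_range.1 (hsub hx)
        omega
      set D0 : FallData n := (fun i => Fin.castSucc i, ∅, T.attachFin hlt) with hD0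
      have hw0 : ∀ i : Fin n, D0.w i = (i : ℕ) := fun i => rfl
      have hP : D0.IsDecDyckF 0 b ∧ D0.allZeroBounceWord ∧ D0.firstPeakUndecorated := by
        refine ⟨⟨?_, ?_, ?_, ?_, ?_, ?_⟩, ?_, ?_⟩
        · intro i hi; rw [hw0]; exact hi
        · intro i j hj; rw [hw0, hw0]; omega
        · intro i hi; exact absurd hi (Finset.notMem_empty i)
        · intro j hj
          apply (D0.isFall_iff hw0 j).2
          have : (j : ℕ) ∈ T := (Finset.mem_attachFin hlt).1 hj
          have := Finset.mem_range.1 (hsub this)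
          omega
        · rfl
        · rw [Finset.card_attachFin, hcard]
        · intro r
          exact D0.blabel_of_diag hw0 r r.2
        · intro i hi; exact absurd hi (Finset.notMem_empty i)
      refine ⟨⟨D0, hP⟩, Finset.mem_univ _, ?_⟩
      ext x
      simp only [Finset.mem_image]
      constructor
      · rintro ⟨j, hj, rfl⟩
        exact (Finset.mem_attachFin hlt).1 hj
      · intro hx
        exact ⟨⟨x, hlt x hx⟩, (Finset.mem_attachFin hlt).2 hx, rfl⟩
    · -- values
      rintro ⟨D, hD, hz, hfp⟩ -
      have hw := D.w_eq hn hD.1 hD.2.1 hz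
      have hbounce : D.bounce = 0 := D.bounce_of_zero hz
      have harea : D.area = (∑ k ∈ Finset.range n, k)
          - ∑ x ∈ D.2.2.image (fun j : Fin n => (j : ℕ)), (n - (x + 1)) := by
        rw [FallData.area]
        have h1 : ∑ i : Fin n, D.w i = ∑ k ∈ Finset.range n, k := by
          rw [Finset.sum_congr rfl (fun i _ => hw i)]
          exact Fin.sum_univ_eq_sum_range (fun k => k) n
        have h2 : ∑ j ∈ D.2.2, (D.pathHeight (j : ℕ) - ((j : ℕ) + 1))
            = ∑ x ∈ D.2.2.image (fun j : Fin n => (j : ℕ)), (n - (x + 1)) := by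
          rw [Finset.sum_image (fun x _ y _ h => Fin.val_injective h)]
          exact Finset.sum_congr rfl fun j _ => by rw [D.pathHeight_of_diag hw]
        rw [h1, h2]
      rw [hbounce, pow_zero, mul_one, harea]
  · rw [if_neg ha, zero_mul, zero_mul]
    have : IsEmpty {D : FallData n //
        D.IsDecDyckF a b ∧ D.allZeroBounceWord ∧ D.firstPeakUndecorated} := by
      constructor
      rintro ⟨D, hD, hz, hfp⟩
      have hw := D.w_eq hn hD.1 hD.2.1 hz
      have hpe := D.peaks_empty hw hD.2.2.1 hfp
      exact ha (by rw [← hD.2.2.2.2.1, hpe, Finset.card_empty])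
    rw [Finset.univ_eq_empty, Finset.sum_empty]
end
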